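/- For a discrete quasi-copula Q on a finite mesh, write Q = Q_pos − Q_neg where Q_pos and Q_neg are the (unique) grounded functions on the mesh with V_{Q_pos}(R_{ij}) = max{V_Q(R_{ij}),0} and V_{Q_neg}(R_{ij}) = −min{V_Q(R_{ij}),0} for all minimal rectangles R_{ij}. If Q is a proper (i.e., not a copula) discrete quasi-copula, then α_{Q_pos} − α_{Q_neg} = 1, where for a nonzero grounded 2-increasing function A, α_A = max_{i,j}{ V_A([x_i,x_{i+1}]×[0,1])/(x_{i+1}−x_i), V_A([0,1]×[y_j,y_{j+1}])/(y_{j+1}−y_j) }. -/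

import Mathlib

open Finset

/-- A mesh on [0,1]: strictly increasing points from 0 to 1. -/
def IsMesh {k : ℕ} (x : Fin (k+2) → ℝ) : Prop :=
  StrictMono x ∧ x 0 = 0 ∧ x (Fin.last (k+1)) = 1

/-- Volume of a rectangle with vertex indices (i₁,j₁),(i₂,j₂). -/
def VolR {n m : ℕ} (Q : Fin (n+2) → Fin (m+2) → ℝ)
    (i₁ i₂ : Fin (n+2)) (j₁ j₂ : Fin (m+2)) : ℝ :=
  Q i₂ j₂ - Q i₁ j₂ - Q i₂ j₁ + Q i₁ j₁

/-- Volume of the minimal rectangle R_{ij}. -/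
def Vol {n m : ℕ} (Q : Fin (n+2) → Fin (m+2) → ℝ)
    (i : Fin (n+1)) (j : Fin (m+1)) : ℝ :=
  VolR Q i.castSucc i.succ j.castSucc j.succ

/-- Discrete copula on the mesh δ₁ × δ₂ given by `x` and `y`. -/
def IsDiscCopula {n m : ℕ} (x : Fin (n+2) → ℝ) (y : Fin (m+2) → ℝ)
    (C : Fin (n+2) → Fin (m+2) → ℝ) : Prop :=
  (∀ i, C i 0 = 0) ∧ (∀ j, C 0 j = 0) ∧
  (∀ i, C i (Fin.last (m+1)) = x i) ∧ (∀ j, C (Fin.last (n+1)) j = y j) ∧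
  (∀ i₁ i₂ j₁ j₂, i₁ ≤ i₂ → j₁ ≤ j₂ → 0 ≤ VolR C i₁ i₂ j₁ j₂)

/-- Discrete quasi-copula on the mesh δ₁ × δ₂ given by `x` and `y`. -/
def IsDiscQuasiCopula {n m : ℕ} (x : Fin (n+2) → ℝ) (y : Fin (m+2) → ℝ)
    (Q : Fin (n+2) → Fin (m+2) → ℝ) : Prop :=
  (∀ i, Q i 0 = 0) ∧ (∀ j, Q 0 j = 0) ∧
  (∀ i, Q i (Fin.last (m+1)) = x i) ∧ (∀ j, Q (Fin.last (n+1)) j = y j) ∧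
  (∀ i₁ i₂ j, i₁ ≤ i₂ → Q i₁ j ≤ Q i₂ j) ∧
  (∀ i j₁ j₂, j₁ ≤ j₂ → Q i j₁ ≤ Q i j₂) ∧
  (∀ i₁ i₂ j₁ j₂, |Q i₂ j₂ - Q i₁ j₁| ≤ |x i₂ - x i₁| + |y j₂ - y j₁|)

/-- The optimal mass-domination constant α_A. -/
noncomputable def alphaA {n m : ℕ} (x : Fin (n+2) → ℝ) (y : Fin (m+2) → ℝ)
    (A : Fin (n+2) → Fin (m+2) → ℝ) : ℝ :=
  max (⨆ i : Fin (n+1),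
        VolR A i.castSucc i.succ 0 (Fin.last (m+1)) / (x i.succ - x i.castSucc))
      (⨆ j : Fin (m+1),
        VolR A 0 (Fin.last (n+1)) j.castSucc j.succ / (y j.succ - y j.castSucc))

/-- The upper bound copula C̄_A. -/
noncomputable def Cbar {n m : ℕ} (x : Fin (n+2) → ℝ) (y : Fin (m+2) → ℝ)
    (A : Fin (n+2) → Fin (m+2) → ℝ) (i : Fin (n+2)) (j : Fin (m+2)) : ℝ :=
  min (x i - VolR A 0 i j (Fin.last (m+1)) / alphaA x y A)
      (y j - VolR A i (Fin.last (n+1)) 0 j / alphaA x y A)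

/-- The lower bound copula C̲_A. -/
noncomputable def Cunder {n m : ℕ} (x : Fin (n+2) → ℝ) (y : Fin (m+2) → ℝ)
    (A : Fin (n+2) → Fin (m+2) → ℝ) (i : Fin (n+2)) (j : Fin (m+2)) : ℝ :=
  max (VolR A 0 i 0 j / alphaA x y A)
      (x i + y j - 1 + VolR A i (Fin.last (n+1)) j (Fin.last (m+1)) / alphaA x y A)


lemma tele {k : ℕ} (g : Fin (k+2) → ℝ) :
    ∑ j : Fin (k+1), (g j.succ - g j.castSucc) = g (Fin.last (k+1)) - g 0 := by
  rw [Finset.sum_sub_distrib]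
  have h1 : ∑ j : Fin (k+1), g j.succ = (∑ j : Fin (k+2), g j) - g 0 := by
    rw [eq_sub_iff_add_eq, add_comm, ← Fin.sum_univ_succ]
  have h2 : ∑ j : Fin (k+1), g j.castSucc = (∑ j : Fin (k+2), g j) - g (Fin.last (k+1)) := by
    rw [eq_sub_iff_add_eq, ← Fin.sum_univ_castSucc]
  rw [h1, h2]; ring

lemma ciSup_one_add {ι : Type*} [Fintype ι] [Nonempty ι] (f : ι → ℝ) :
    ⨆ i, (1 + f i) = 1 + ⨆ i, f i := by
  rw [← Finset.sup'_univ_eq_ciSup, ← Finset.sup'_univ_eq_ciSup]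
  exact (Finset.comp_sup'_eq_sup'_comp _ (fun a : ℝ => 1 + a)
    (fun a b => by simp [max_add_add_left])).symm

lemma rowT {n m : ℕ} (A : Fin (n+2) → Fin (m+2) → ℝ) (i : Fin (n+1)) :
    VolR A i.castSucc i.succ 0 (Fin.last (m+1)) = ∑ j : Fin (m+1), Vol A i j := by
  have h := tele (fun j => A i.succ j - A i.castSucc j)
  rw [eq_comm]
  calc ∑ j : Fin (m+1), Vol A i j
      = ∑ j : Fin (m+1), ((A i.succ j.succ - A i.castSucc j.succ)
          - (A i.succ j.castSucc - A i.castSucc j.castSucc)) := by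
        refine Finset.sum_congr rfl fun j _ => ?_
        simp only [Vol, VolR]; ring
    _ = _ := by rw [h]; simp only [VolR]; ring

lemma colT {n m : ℕ} (A : Fin (n+2) → Fin (m+2) → ℝ) (j : Fin (m+1)) :
    VolR A 0 (Fin.last (n+1)) j.castSucc j.succ = ∑ i : Fin (n+1), Vol A i j := by
  have h := tele (fun i => A i j.succ - A i j.castSucc)
  rw [eq_comm]
  calc ∑ i : Fin (n+1), Vol A i j
      = ∑ i : Fin (n+1), ((A i.succ j.succ - A i.succ j.castSucc)
          - (A i.castSucc j.succ - A i.castSucc j.castSucc)) := by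
        refine Finset.sum_congr rfl fun i _ => ?_
        simp only [Vol, VolR]; ring
    _ = _ := by rw [h]; simp only [VolR]; ring

theorem stmt9 {n m : ℕ} (x : Fin (n+2) → ℝ) (y : Fin (m+2) → ℝ)
    (Q Qpos Qneg : Fin (n+2) → Fin (m+2) → ℝ)
    (hx : IsMesh x) (hy : IsMesh y) (hQ : IsDiscQuasiCopula x y Q)
    (hproper : ∃ i j, Vol Q i j < 0)
    (hposg1 : ∀ i, Qpos i 0 = 0) (hposg2 : ∀ j, Qpos 0 j = 0)
    (hnegg1 : ∀ i, Qneg i 0 = 0) (hnegg2 : ∀ j, Qneg 0 j = 0)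
    (hpos : ∀ i j, Vol Qpos i j = max (Vol Q i j) 0)
    (hneg : ∀ i j, Vol Qneg i j = -(min (Vol Q i j) 0)) :
    alphaA x y Qpos - alphaA x y Qneg = 1 := by
  obtain ⟨hxm, hx0, hx1⟩ := hx
  obtain ⟨hym, hy0, hy1⟩ := hy
  obtain ⟨hg1, hg2, hm1, hm2, -, -, -⟩ := hQ
  have hΔx : ∀ i : Fin (n+1), (0:ℝ) < x i.succ - x i.castSucc :=
    fun i => sub_pos.2 (hxm Fin.castSucc_lt_succ)
  have hΔy : ∀ j : Fin (m+1), (0:ℝ) < y j.succ - y j.castSucc :=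
    fun j => sub_pos.2 (hym Fin.castSucc_lt_succ)
  have cell : ∀ (i : Fin (n+1)) (j : Fin (m+1)), Vol Qpos i j = Vol Q i j + Vol Qneg i j := by
    intro i j
    rw [hpos, hneg]
    have := max_add_min (Vol Q i j) 0
    linarith
  have rowQ : ∀ i : Fin (n+1), VolR Q i.castSucc i.succ 0 (Fin.last (m+1))
      = x i.succ - x i.castSucc := by
    intro i; simp only [VolR, hm1, hg1]; ring
  have colQ : ∀ j : Fin (m+1), VolR Q 0 (Fin.last (n+1)) j.castSucc j.succ
      = y j.succ - y j.castSucc := by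
    intro j; simp only [VolR, hm2, hg2]; ring
  have keyrow : ∀ i : Fin (n+1), VolR Qpos i.castSucc i.succ 0 (Fin.last (m+1))
      = (x i.succ - x i.castSucc) + VolR Qneg i.castSucc i.succ 0 (Fin.last (m+1)) := by
    intro i
    rw [rowT Qpos, rowT Qneg, ← rowQ i, rowT Q, ← Finset.sum_add_distrib]
    exact Finset.sum_congr rfl fun j _ => cell i j
  have keycol : ∀ j : Fin (m+1), VolR Qpos 0 (Fin.last (n+1)) j.castSucc j.succ
      = (y j.succ - y j.castSucc) + VolR Qneg 0 (Fin.last (n+1)) j.castSucc j.succ := by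
    intro j
    rw [colT Qpos, colT Qneg, ← colQ j, colT Q, ← Finset.sum_add_distrib]
    exact Finset.sum_congr rfl fun i _ => cell i j
  have rowdiv : ∀ i : Fin (n+1),
      VolR Qpos i.castSucc i.succ 0 (Fin.last (m+1)) / (x i.succ - x i.castSucc)
      = 1 + VolR Qneg i.castSucc i.succ 0 (Fin.last (m+1)) / (x i.succ - x i.castSucc) := by
    intro i
    rw [keyrow i, add_div, div_self (ne_of_gt (hΔx i))]
  have coldiv : ∀ j : Fin (m+1),
      VolR Qpos 0 (Fin.last (n+1)) j.castSucc j.succ / (y j.succ - y j.castSucc)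
      = 1 + VolR Qneg 0 (Fin.last (n+1)) j.castSucc j.succ / (y j.succ - y j.castSucc) := by
    intro j
    rw [keycol j, add_div, div_self (ne_of_gt (hΔy j))]
  unfold alphaA
  rw [iSup_congr rowdiv, iSup_congr coldiv, ciSup_one_add, ciSup_one_add, max_add_add_left]
  ring
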